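/- Let A be a commutative ring, p a prime, d ∈ A a non-zero-divisor on A/pA. The p-th power map (A/pA)/(d̄) → (A/pA)/(d̄^p), sending a mod (p,d) to a^p mod (p, d^p), is injective if and only if A/pA is p-root closed in (A/pA)[1/d̄]. -/

import Mathlib

/-- Let `A` be a commutative ring, `p` a prime and `d ∈ A` a
non-zero-divisor on `A/pA`.  The `p`-th power map
`(A/pA)/(d̄) → (A/pA)/(d̄^p)`, `a ↦ a^p`, is injective if and only if `A/pA` is
`p`-root closed in `(A/pA)[1/d̄]`. -/
theorem pPower_injective_iff_pRootClosed
    (A : Type*) [CommRing A] (p : ℕ) (hp : p.Prime) (d : A)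
    -- `d̄` is a non-zero-divisor on `A/pA`:
    (hdreg : ∀ a : A, d * a ∈ Ideal.span {(p : A)} → a ∈ Ideal.span {(p : A)}) :
    -- injectivity of the `p`-th power map `(A/pA)/(d̄) → (A/pA)/(d̄^p)` …
    (∀ a : A, a ^ p ∈ Ideal.span ({(p : A), d ^ p} : Set A) →
        a ∈ Ideal.span ({(p : A), d} : Set A)) ↔
    -- … iff `A/pA` is `p`-root closed in `(A/pA)[1/d̄]`:
    (∀ (a : A) (n : ℕ),
      (∃ b : A, a ^ p - d ^ (n * p) * b ∈ Ideal.span {(p : A)}) →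
      ∃ c : A, a - d ^ n * c ∈ Ideal.span {(p : A)}) := by
  set I : Ideal A := Ideal.span {(p : A)} with hI
  have hpI : (p : A) ∈ I := Ideal.subset_span rfl
  -- cancel powers of d modulo p
  have hreg : ∀ (k : ℕ) (x : A), d ^ k * x ∈ I → x ∈ I := by
    intro k
    induction k with
    | zero => intro x hx; simpa using hx
    | succ k ih =>
      intro x hx
      apply ih
      apply hdreg
      rw [← mul_assoc, mul_comm d (d ^ k)]
      simpa [pow_succ, mul_assoc] using hx
  constructor
  · intro H a n
    induction n generalizing a with
    | zero =>
      intro _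
      exact ⟨a, by simp⟩
    | succ n ih =>
      rintro ⟨b, hb⟩
      -- a ^ p ∈ (p, d^p)
      have hmem : a ^ p ∈ Ideal.span ({(p : A), d ^ p} : Set A) := by
        have h1 : a ^ p - d ^ ((n + 1) * p) * b ∈ Ideal.span ({(p : A), d ^ p} : Set A) := by
          rw [Ideal.span_insert]
          exact Ideal.mem_sup_left (by simpa [hI] using hb)
        have h2 : d ^ ((n + 1) * p) * b ∈ Ideal.span ({(p : A), d ^ p} : Set A) := by
          have : d ^ ((n + 1) * p) * b = d ^ p * (d ^ (n * p) * b) := by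
            ring
          rw [this]
          exact Ideal.mul_mem_right _ _
            (Ideal.mem_span_pair.2 ⟨0, 1, by ring⟩)
        simpa using add_mem h1 h2
      obtain ⟨u, v, huv⟩ := Ideal.mem_span_pair.1 (H a hmem)
      -- a ^ p ≡ v ^ p * d ^ p mod p
      obtain ⟨r, hr⟩ := exists_add_pow_prime_eq hp (u * (p : A)) (v * d)
      have hup : (u * (p : A)) ^ p ∈ I :=
        Ideal.pow_mem_of_mem I (Ideal.mul_mem_left _ _ hpI) p hp.pos
      have hfrob : a ^ p - v ^ p * d ^ p ∈ I := by
        have heq : a ^ p - v ^ p * d ^ p = (u * (p : A)) ^ p + (p : A) * ((u * (p : A)) * (v * d) * r) := by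
          rw [← huv, hr, mul_pow v d]; ring
        rw [heq]
        exact add_mem hup (Ideal.mul_mem_right _ _ hpI)
      -- d ^ p * (v ^ p - d ^ (n*p) * b) ∈ I
      have hcancel : v ^ p - d ^ (n * p) * b ∈ I := by
        apply hreg p
        have : d ^ p * (v ^ p - d ^ (n * p) * b)
            = (a ^ p - d ^ ((n + 1) * p) * b) - (a ^ p - v ^ p * d ^ p) := by
          ring
        rw [this]
        exact sub_mem hb hfrob
      obtain ⟨c, hc⟩ := ih v ⟨b, hcancel⟩
      refine ⟨c, ?_⟩
      have : a - d ^ (n + 1) * c = u * (p : A) + d * (v - d ^ n * c) := by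
        rw [← huv]; ring
      rw [this]
      exact add_mem (Ideal.mul_mem_left _ _ hpI) (Ideal.mul_mem_left _ _ hc)
  · intro H a ha
    obtain ⟨u, v, huv⟩ := Ideal.mem_span_pair.1 ha
    obtain ⟨c, hc⟩ := H a 1 ⟨v, by
      rw [one_mul, ← huv]
      have : u * (p : A) + v * d ^ p - d ^ p * v = u * (p : A) := by ring
      rw [this]
      exact Ideal.mul_mem_left _ _ hpI⟩
    rw [pow_one] at hc
    have : a = (a - d * c) + d * c := by ring
    rw [this, Ideal.span_insert]
    exact add_mem (Ideal.mem_sup_left hc)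
      (Ideal.mem_sup_right (Ideal.mem_span_singleton.2 ⟨c, rfl⟩))
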